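/- For T ≥ r ≥ 1, p ∈ [1,2], and m ≥ 1 inputs u_1,...,u_m in the unit ℓ_p-ball of ℝ^T, define Σ(u) = ∑_{k=1}^m Toep(u_k)ᵀToep(u_k). Then for any such inputs with Σ(u) invertible, Tr([Σ(u)⁻¹]_{[r]}) ≥ r/m, where [M]_{[r]} is the upper-left r×r block; moreover the choice u_1 = ... = u_m = e_1 achieves Tr([Σ(u)⁻¹]_{[r]}) = r/m. -/

import Mathlib

set_option maxHeartbeats 1000000

open Matrix

/-- Lower-triangular Toeplitz matrix with first column `v`. -/
def ToepR {T : ℕ} (v : Fin T → ℝ) : Matrix (Fin T) (Fin T) ℝ :=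
  fun k ℓ => if (ℓ : ℕ) ≤ (k : ℕ) then
    v ⟨(k : ℕ) - (ℓ : ℕ), lt_of_le_of_lt (Nat.sub_le _ _) k.isLt⟩ else 0

lemma psd_diag_nonneg {n : Type*} [Fintype n] [DecidableEq n]
    {A : Matrix n n ℝ} (hA : A.PosSemidef) (i : n) : 0 ≤ A i i := by
  have := hA.dotProduct_mulVec_nonneg (Pi.single i 1)
  simpa [single_dotProduct, mulVec_single] using this

lemma inv_diag_mul_diag {n : Type*} [Fintype n] [DecidableEq n]
    {A : Matrix n n ℝ} (hA : A.PosSemidef) (hdet : IsUnit A.det) (i : n) :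
    1 ≤ A i i * A⁻¹ i i := by
  have hsym : Aᵀ = A := by
    have := hA.1
    rwa [IsHermitian, conjTranspose_eq_transpose_of_trivial] at this
  set e : n → ℝ := Pi.single i 1 with he
  set y : n → ℝ := A⁻¹ *ᵥ e with hy
  have hAy : A *ᵥ y = e := by
    rw [hy, mulVec_mulVec, mul_nonsing_inv _ hdet, one_mulVec]
  have hee : e ⬝ᵥ e = 1 := by simp [he, single_dotProduct]
  have h1 : e ⬝ᵥ A *ᵥ y = 1 := by rw [hAy, hee]
  have h2 : y ⬝ᵥ A *ᵥ e = 1 := by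
    calc y ⬝ᵥ A *ᵥ e = (Aᵀ *ᵥ y) ⬝ᵥ e := by
          rw [dotProduct_mulVec, mulVec_transpose]
      _ = 1 := by rw [hsym, hAy, hee]
  have hyi : y ⬝ᵥ A *ᵥ y = A⁻¹ i i := by
    rw [hAy, hy]
    simp [he, mulVec_single, dotProduct_single]
  have hei : e ⬝ᵥ A *ᵥ e = A i i := by
    simp [he, mulVec_single, single_dotProduct]
  set q : ℝ := A⁻¹ i i with hq
  set c : ℝ := A i i with hc
  have key : ∀ t : ℝ, 0 ≤ q * (t * t) + 2 * t + c := by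
    intro t
    have h0 := hA.dotProduct_mulVec_nonneg (e + t • y)
    have hexp : (e + t • y) ⬝ᵥ A *ᵥ (e + t • y)
        = (e ⬝ᵥ A *ᵥ e) + t * (e ⬝ᵥ A *ᵥ y) + t * (y ⬝ᵥ A *ᵥ e)
          + t * (t * (y ⬝ᵥ A *ᵥ y)) := by
      simp only [mulVec_add, mulVec_smul, dotProduct_add, add_dotProduct,
        dotProduct_smul, smul_dotProduct, smul_eq_mul]
      ring
    rw [star_trivial, hexp, h1, h2, hyi, hei] at h0
    linarith
  have hd := discrim_le_zero key
  rw [discrim] at hd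
  nlinarith [hd]

lemma sum_sq_le_one {T : ℕ} (p : ℝ) (hp1 : 1 ≤ p) (hp2 : p ≤ 2) (v : Fin T → ℝ)
    (h : (∑ ℓ, |v ℓ| ^ p) ^ (1 / p) ≤ 1) : ∑ j, v j ^ 2 ≤ 1 := by
  have hp0 : 0 < p := by linarith
  set S := ∑ ℓ, |v ℓ| ^ p with hSdef
  have hS0 : 0 ≤ S := Finset.sum_nonneg fun ℓ _ => Real.rpow_nonneg (abs_nonneg _) _
  have hS1 : S ≤ 1 := by
    have h2 := Real.rpow_le_rpow (Real.rpow_nonneg hS0 _) h hp0.le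
    rwa [← Real.rpow_mul hS0, one_div_mul_cancel (ne_of_gt hp0), Real.rpow_one,
      Real.one_rpow] at h2
  have habs : ∀ j, |v j| ≤ 1 := by
    intro j
    by_contra hcon
    push_neg at hcon
    have h1 : (1 : ℝ) < |v j| ^ p := by
      calc (1 : ℝ) = 1 ^ p := (Real.one_rpow p).symm
        _ < |v j| ^ p := Real.rpow_lt_rpow zero_le_one hcon hp0
    have hle : |v j| ^ p ≤ S :=
      Finset.single_le_sum (fun ℓ _ => Real.rpow_nonneg (abs_nonneg _) _) (Finset.mem_univ j)
    linarith
  calc ∑ j, v j ^ 2 ≤ ∑ j, |v j| ^ p := by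
        apply Finset.sum_le_sum
        intro j _
        rcases eq_or_lt_of_le (abs_nonneg (v j)) with h0 | h0
        · have hv0 : v j = 0 := abs_eq_zero.mp h0.symm
          rw [hv0]
          simp only [abs_zero]
          rw [Real.zero_rpow (ne_of_gt hp0)]
          norm_num
        · have : |v j| ^ (2 : ℝ) ≤ |v j| ^ p :=
            Real.rpow_le_rpow_of_exponent_ge h0 (habs j) hp2
          calc v j ^ 2 = |v j| ^ (2 : ℕ) := by rw [sq_abs]
            _ = |v j| ^ ((2 : ℕ) : ℝ) := by rw [Real.rpow_natCast]
            _ ≤ |v j| ^ p := by norm_num at this ⊢; exact this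
    _ ≤ 1 := hS1

lemma toep_col_sq {T : ℕ} (v : Fin T → ℝ) (i : Fin T) :
    ∑ ℓ, (ToepR v ℓ i) ^ 2 ≤ ∑ j, v j ^ 2 := by
  set w : ℕ → ℝ := fun n => if h : n < T then v ⟨n, h⟩ else 0 with hwdef
  have hw : ∀ (n : ℕ) (hn : n < T), w n = v ⟨n, hn⟩ := by
    intro n hn
    simp only [hwdef]
    exact dif_pos hn
  have h1 : ∑ ℓ : Fin T, (ToepR v ℓ i) ^ 2
      = ∑ n ∈ Finset.range T, (if (i : ℕ) ≤ n then w (n - (i : ℕ)) else 0) ^ 2 := by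
    rw [← Fin.sum_univ_eq_sum_range (fun n => (if (i : ℕ) ≤ n then w (n - (i : ℕ)) else 0) ^ 2) T]
    apply Finset.sum_congr rfl
    intro ℓ _
    congr 1
    simp only [ToepR]
    split
    · exact (hw _ (lt_of_le_of_lt (Nat.sub_le _ _) ℓ.isLt)).symm
    · rfl
  have h2 : ∑ n ∈ Finset.range T, (if (i : ℕ) ≤ n then w (n - (i : ℕ)) else 0) ^ 2
      = ∑ n ∈ Finset.Ico (i : ℕ) T, w (n - (i : ℕ)) ^ 2 := by
    have hcongr : ∑ n ∈ Finset.range T, (if (i : ℕ) ≤ n then w (n - (i : ℕ)) else 0) ^ 2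
        = ∑ n ∈ Finset.range T, (if (i : ℕ) ≤ n then w (n - (i : ℕ)) ^ 2 else 0) := by
      apply Finset.sum_congr rfl
      intro n _
      split <;> simp
    rw [hcongr, ← Finset.sum_filter]
    apply Finset.sum_congr
    · ext n
      simp only [Finset.mem_filter, Finset.mem_range, Finset.mem_Ico]
      tauto
    · intro n _
      rfl
  have h3 : ∑ n ∈ Finset.Ico (i : ℕ) T, w (n - (i : ℕ)) ^ 2
      = ∑ d ∈ Finset.range (T - (i : ℕ)), w d ^ 2 := by
    rw [Finset.sum_Ico_eq_sum_range]
    apply Finset.sum_congr rfl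
    intro d _
    have hd : (i : ℕ) + d - (i : ℕ) = d := by omega
    rw [hd]
  have h4 : ∑ d ∈ Finset.range (T - (i : ℕ)), w d ^ 2 ≤ ∑ d ∈ Finset.range T, w d ^ 2 := by
    apply Finset.sum_le_sum_of_subset_of_nonneg
    · exact Finset.range_subset_range.mpr (Nat.sub_le _ _)
    · intro d _ _
      positivity
  have h5 : ∑ d ∈ Finset.range T, w d ^ 2 = ∑ j : Fin T, v j ^ 2 := by
    rw [← Fin.sum_univ_eq_sum_range (fun n => w n ^ 2) T]
    apply Finset.sum_congr rfl
    intro j _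
    rw [hw j j.isLt]
  rw [h1, h2, h3, ← h5]
  exact h4

theorem aopt_lp_one_two (T r m : ℕ) (hr : 1 ≤ r) (hTr : r ≤ T) (hm : 1 ≤ m)
    (p : ℝ) (hp1 : 1 ≤ p) (hp2 : p ≤ 2) :
    (∀ u : Fin m → Fin T → ℝ,
      (∀ k, (∑ ℓ, |u k ℓ| ^ p) ^ (1 / p) ≤ 1) →
      IsUnit (∑ k, (ToepR (u k)).transpose * ToepR (u k)).det →
      ((∑ k, (ToepR (u k)).transpose * ToepR (u k))⁻¹.submatrix
          (Fin.castLE hTr) (Fin.castLE hTr)).trace ≥ (r : ℝ) / m) ∧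
    ((∑ _k : Fin m, (ToepR (fun ℓ : Fin T => if ℓ = ⟨0, by omega⟩ then (1 : ℝ) else 0)).transpose
        * ToepR (fun ℓ : Fin T => if ℓ = ⟨0, by omega⟩ then (1 : ℝ) else 0))⁻¹.submatrix
          (Fin.castLE hTr) (Fin.castLE hTr)).trace = (r : ℝ) / m := by
  have hm0 : (0 : ℝ) < m := by exact_mod_cast hm
  constructor
  · intro u hu hdet
    set S := ∑ k, (ToepR (u k)).transpose * ToepR (u k) with hS
    have hPSD : S.PosSemidef := by
      rw [hS]
      refine Finset.sum_induction _ (fun M : Matrix (Fin T) (Fin T) ℝ => M.PosSemidef)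
        (fun a b ha hb => ha.add hb) Matrix.PosSemidef.zero ?_
      intro k _
      have := Matrix.posSemidef_conjTranspose_mul_self (ToepR (u k))
      rwa [conjTranspose_eq_transpose_of_trivial] at this
    have hdiag : ∀ i : Fin T, S i i ≤ m := by
      intro i
      rw [hS]
      rw [Matrix.sum_apply]
      calc ∑ k, ((ToepR (u k)).transpose * ToepR (u k)) i i
          = ∑ k, ∑ ℓ, (ToepR (u k) ℓ i) ^ 2 := by
            apply Finset.sum_congr rfl
            intro k _
            rw [Matrix.mul_apply]
            apply Finset.sum_congr rfl
            intro ℓ _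
            rw [Matrix.transpose_apply, sq]
        _ ≤ ∑ _k : Fin m, (1 : ℝ) := by
            apply Finset.sum_le_sum
            intro k _
            exact le_trans (toep_col_sq (u k) i) (sum_sq_le_one p hp1 hp2 (u k) (hu k))
        _ = m := by simp
    have hkey : ∀ i : Fin T, 1 ≤ S i i * S⁻¹ i i := inv_diag_mul_diag hPSD hdet
    have hinv : ∀ i : Fin T, 1 / (m : ℝ) ≤ S⁻¹ i i := by
      intro i
      have h0 : 0 ≤ S i i := psd_diag_nonneg hPSD i
      have h1 := hkey i
      have h2 := hdiag i
      have hX0 : 0 ≤ S⁻¹ i i := psd_diag_nonneg hPSD.inv i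
      rw [div_le_iff₀ hm0]
      nlinarith [mul_nonneg hX0 (sub_nonneg.mpr h2)]
    rw [Matrix.trace]
    have : ∀ i : Fin r, (1 : ℝ) / m ≤ (S⁻¹.submatrix (Fin.castLE hTr) (Fin.castLE hTr)).diag i :=
      fun i => hinv _
    calc (r : ℝ) / m = ∑ _i : Fin r, (1 : ℝ) / m := by
          rw [Finset.sum_const, Finset.card_univ, Fintype.card_fin, nsmul_eq_mul, mul_one_div]
      _ ≤ _ := Finset.sum_le_sum fun i _ => this i
  · have hT0 : 0 < T := by omega
    have e1 : ToepR (fun ℓ : Fin T => if ℓ = ⟨0, by omega⟩ then (1 : ℝ) else 0)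
        = (1 : Matrix (Fin T) (Fin T) ℝ) := by
      ext k ℓ
      simp only [ToepR, one_apply]
      by_cases h : (ℓ : ℕ) ≤ (k : ℕ)
      · rw [if_pos h]
        simp only [Fin.ext_iff]
        split_ifs with h1 h2 h2 <;> first | rfl | omega
      · rw [if_neg h, if_neg]
        intro he
        exact h (le_of_eq (congrArg Fin.val he.symm))
    rw [e1]
    have hsum : (∑ _k : Fin m, (1 : Matrix (Fin T) (Fin T) ℝ).transpose * 1)
        = Matrix.diagonal (fun _ : Fin T => (m : ℝ)) := by
      ext i j
      simp only [Matrix.transpose_one, mul_one, Matrix.sum_apply, Matrix.one_apply,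
        Matrix.diagonal_apply]
      by_cases h : i = j <;> simp [h]
    have hinv : (Matrix.diagonal (fun _ : Fin T => (m : ℝ)))⁻¹
        = Matrix.diagonal (fun _ : Fin T => (m : ℝ)⁻¹) := by
      apply Matrix.inv_eq_right_inv
      rw [Matrix.diagonal_mul_diagonal]
      rw [show (fun i : Fin T => (m : ℝ) * (m : ℝ)⁻¹) = fun _ => (1 : ℝ) by
        funext i; exact mul_inv_cancel₀ (ne_of_gt hm0)]
      exact Matrix.diagonal_one
    rw [hsum, hinv, Matrix.trace]
    simp only [Matrix.diag, Matrix.submatrix_apply, Matrix.diagonal_apply_eq]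
    rw [Finset.sum_const, Finset.card_univ, Fintype.card_fin, nsmul_eq_mul, div_eq_mul_inv]
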